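/- Let D ⊆ ℂ be a domain, let m ∈ ℕ, let 𝓡 be a family of rational functions of degree at most m (restricted to D), and let 𝓖 be a family of meromorphic functions on D. Let a₁, a₂, a₃ ∈ ℂ∞ be three distinct values. If 𝓖 is normal in D and for each R ∈ 𝓡 there exists g ∈ 𝓖 such that R and g share aⱼ partially in D for j = 1, 2, 3, then 𝓡 is normal in D. -/

import Mathlib

open Filter Topology OnePoint

/-- The point of the Riemann sphere `ℂ∞ = ℂ ∪ {∞}` viewed in `ℂ` (with `∞ ↦ 0` as junk value). -/
noncomputable def toC (x : OnePoint ℂ) : ℂ := Option.elim x 0 id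

/-- The spherical (chordal) metric on the Riemann sphere `ℂ∞`. -/
noncomputable def sphDist (x y : OnePoint ℂ) : ℝ :=
  Option.elim x
    (Option.elim y 0 (fun w => 2 / Real.sqrt (1 + ‖w‖ ^ 2)))
    (fun z => Option.elim y (2 / Real.sqrt (1 + ‖z‖ ^ 2))
      (fun w => 2 * ‖z - w‖ /
        (Real.sqrt (1 + ‖z‖ ^ 2) * Real.sqrt (1 + ‖w‖ ^ 2))))

/-- `f : ℂ → ℂ∞` is meromorphic on `D`: near each point of `D` it is either (the coercion of)
an analytic function, or the reciprocal of an analytic function (with poles sent to `∞`),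
and it is not locally identically `∞`. -/
def SphMeromorphicOn (f : ℂ → OnePoint ℂ) (D : Set ℂ) : Prop :=
  ∀ z ∈ D, ∃ g : ℂ → ℂ, AnalyticAt ℂ g z ∧ ¬ (∀ᶠ w in nhds z, g w = 0) ∧
    ((∀ᶠ w in nhds z, f w = (g w : OnePoint ℂ)) ∨
     (∀ᶠ w in nhds z, f w = if g w = 0 then (∞ : OnePoint ℂ) else (((g w)⁻¹ : ℂ) : OnePoint ℂ)))

/-- Spherically locally uniform convergence of a sequence of sphere-valued maps on `U`. -/
def SphConvLocUnifOn (F : ℕ → ℂ → OnePoint ℂ) (g : ℂ → OnePoint ℂ) (U : Set ℂ) : Prop :=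
  ∀ K : Set ℂ, K ⊆ U → IsCompact K → ∀ ε : ℝ, 0 < ε →
    ∀ᶠ n in atTop, ∀ z ∈ K, sphDist (F n z) (g z) < ε

/-- A family of sphere-valued maps is normal on `U` if every sequence from the family has a
subsequence converging spherically locally uniformly on `U`. -/
def NormalOn (F : Set (ℂ → OnePoint ℂ)) (U : Set ℂ) : Prop :=
  ∀ s : ℕ → ℂ → OnePoint ℂ, (∀ n, s n ∈ F) →
    ∃ φ : ℕ → ℕ, StrictMono φ ∧ ∃ g : ℂ → OnePoint ℂ, SphConvLocUnifOn (s ∘ φ) g U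

/-- `g` is a limit function of the family `G` on `U`. -/
def IsLimitFunctionOf (g : ℂ → OnePoint ℂ) (G : Set (ℂ → OnePoint ℂ)) (U : Set ℂ) : Prop :=
  ∃ s : ℕ → ℂ → OnePoint ℂ, (∀ n, s n ∈ G) ∧ SphConvLocUnifOn s g U

/-- `f` and `g` share the value `a` partially on `D`: `Ē(f,a) ⊆ Ē(g,a)`. -/
def SharesPartially (f g : ℂ → OnePoint ℂ) (D : Set ℂ) (a : OnePoint ℂ) : Prop :=
  ∀ z ∈ D, f z = a → g z = a

/-- Every `a`-point of `f` in `D` has multiplicity at least `m` (poles when `a = ∞`). -/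
def SphValueMultAtLeast (f : ℂ → OnePoint ℂ) (D : Set ℂ) (a : OnePoint ℂ) (m : ℕ) : Prop :=
  ∀ z ∈ D, f z = a →
    (a = (∞ : OnePoint ℂ) →
      ∀ h : MeromorphicAt (fun w => toC (f w)) z, meromorphicOrderAt (fun w => toC (f w)) z ≤ ((-(m : ℤ) : ℤ) : WithTop ℤ)) ∧
    (∀ b : ℂ, a = (b : OnePoint ℂ) →
      ∀ h : MeromorphicAt (fun w => toC (f w) - b) z, ((m : ℤ) : WithTop ℤ) ≤ meromorphicOrderAt (fun w => toC (f w) - b) z)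

/-- The `k`-th derivative of a sphere-valued meromorphic map (`∞` at the poles). -/
noncomputable def sphDeriv (k : ℕ) (f : ℂ → OnePoint ℂ) : ℂ → OnePoint ℂ :=
  fun z => Option.elim (f z) (∞ : OnePoint ℂ)
    (fun _ => ((iteratedDeriv k (fun w => toC (f w)) z : ℂ) : OnePoint ℂ))

/-- Scalar multiplication on the Riemann sphere (fixing `∞`). -/
noncomputable def sphSmul (c : ℂ) (x : OnePoint ℂ) : OnePoint ℂ :=
  Option.elim x (∞ : OnePoint ℂ) (fun w => ((c * w : ℂ) : OnePoint ℂ))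

open scoped Classical in
/-- The order of `f` at `z` in the sense of meromorphic functions (junk value `0` if `f` is not
meromorphic at `z`). Positive = zero of that order, negative = pole of that order. -/
noncomputable def meroOrderAt (f : ℂ → ℂ) (z : ℂ) : WithTop ℤ :=
  if h : MeromorphicAt f z then meromorphicOrderAt f z else 0

/-- The multiplicity of `z` as a pole of the sphere-valued map `f` (0 if not a pole). -/
noncomputable def poleMult (f : ℂ → OnePoint ℂ) (z : ℂ) : ℕ :=
  (-((meroOrderAt (fun w => toC (f w)) z).untopD 0)).toNat

/-- The Nevanlinna pole-counting number `n(t, f)`: the number of poles of `f` in the closed disc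
of radius `t`, counted with multiplicity. -/
noncomputable def poleCountingNum (f : ℂ → OnePoint ℂ) (t : ℝ) : ℕ :=
  ∑ᶠ z ∈ Metric.closedBall (0 : ℂ) t, poleMult f z

/-- The Nevanlinna proximity function `m(r, f) = (1/2π) ∫₀^{2π} log⁺ |f(r e^{iθ})| dθ`. -/
noncomputable def proximityFn (f : ℂ → OnePoint ℂ) (r : ℝ) : ℝ :=
  (1 / (2 * Real.pi)) * ∫ θ in (0:ℝ)..(2 * Real.pi),
    max 0 (Real.log ‖toC (f ((r : ℂ) * Complex.exp ((θ : ℂ) * Complex.I)))‖)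

/-- The integrated counting function `N(r, f) = ∫₀^r (n(t,f) - n(0,f))/t dt + n(0,f) log r`. -/
noncomputable def integratedCounting (f : ℂ → OnePoint ℂ) (r : ℝ) : ℝ :=
  (∫ t in (0:ℝ)..r, ((poleCountingNum f t : ℝ) - (poleCountingNum f 0 : ℝ)) / t)
    + (poleCountingNum f 0 : ℝ) * Real.log r

/-- The Nevanlinna characteristic `T(r, f) = m(r, f) + N(r, f)`. -/
noncomputable def nevanlinnaT (f : ℂ → OnePoint ℂ) (r : ℝ) : ℝ :=
  proximityFn f r + integratedCounting f r

/-- `f` has finite (Nevanlinna growth) order: `limsup_{r→∞} log T(r,f) / log r < ∞`. -/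
def HasFiniteOrder (f : ℂ → OnePoint ℂ) : Prop :=
  ∃ ρ : ℝ, ∀ᶠ r in atTop, Real.log (nevanlinnaT f r) / Real.log r ≤ ρ

/-- `f : ℂ → ℂ∞` is a rational map: the quotient of two coprime polynomials, with the zeros
of the denominator sent to `∞`. -/
def IsRationalSphereMap (f : ℂ → OnePoint ℂ) : Prop :=
  ∃ P Q : Polynomial ℂ, Q ≠ 0 ∧ IsCoprime P Q ∧
    ∀ z : ℂ, f z = if Q.eval z = 0 then (∞ : OnePoint ℂ)
                   else ((P.eval z / Q.eval z : ℂ) : OnePoint ℂ)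

/-- A rational map `ℂ → ℂ∞` of degree at most `m`. -/
def IsRationalDegLE (f : ℂ → OnePoint ℂ) (m : ℕ) : Prop :=
  ∃ P Q : Polynomial ℂ, Q ≠ 0 ∧ IsCoprime P Q ∧ P.natDegree ≤ m ∧ Q.natDegree ≤ m ∧
    ∀ z : ℂ, f z = if Q.eval z = 0 then (∞ : OnePoint ℂ)
                   else ((P.eval z / Q.eval z : ℂ) : OnePoint ℂ)

set_option maxHeartbeats 1000000

noncomputable def Complex.abs : AbsoluteValue ℂ ℝ := NormedField.toAbsoluteValue ℂ

@[simp] lemma Complex.abs_apply_norm (z : ℂ) : Complex.abs z = ‖z‖ := rfl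

lemma Complex.sq_abs (z : ℂ) : Complex.abs z ^ 2 = Complex.normSq z := Complex.sq_norm z

lemma Complex.abs_ofReal (x : ℝ) : Complex.abs (x : ℂ) = |x| := Complex.norm_real x


section AuxSphereGeometry

lemma sq_abs' (z : ℂ) : Complex.abs z ^ 2 = z.re ^ 2 + z.im ^ 2 := by
  rw [Complex.sq_abs, Complex.normSq_apply]; ring

lemma one_add_sq_pos (z : ℂ) : 0 < 1 + Complex.abs z ^ 2 := by positivity

lemma sqrt_one_add_pos (z : ℂ) : 0 < Real.sqrt (1 + Complex.abs z ^ 2) :=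
  Real.sqrt_pos.2 (one_add_sq_pos z)

lemma key_identity (z w : ℂ) :
    Complex.abs ((((2 / (1 + Complex.abs z ^ 2) : ℝ)) : ℂ) * z
        - (((2 / (1 + Complex.abs w ^ 2) : ℝ)) : ℂ) * w) ^ 2
      + ((Complex.abs z ^ 2 - 1) / (1 + Complex.abs z ^ 2)
          - (Complex.abs w ^ 2 - 1) / (1 + Complex.abs w ^ 2)) ^ 2
    = (2 * Complex.abs (z - w)) ^ 2 / ((1 + Complex.abs z ^ 2) * (1 + Complex.abs w ^ 2)) := by
  have hz : (1 : ℝ) + (z.re ^ 2 + z.im ^ 2) ≠ 0 := by positivity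
  have hw : (1 : ℝ) + (w.re ^ 2 + w.im ^ 2) ≠ 0 := by positivity
  simp only [mul_pow, sq_abs', Complex.sub_re, Complex.sub_im, Complex.re_ofReal_mul,
    Complex.im_ofReal_mul]
  field_simp
  ring

lemma key_identity_infty (z : ℂ) :
    Complex.abs ((((2 / (1 + Complex.abs z ^ 2) : ℝ)) : ℂ) * z - 0) ^ 2
      + ((Complex.abs z ^ 2 - 1) / (1 + Complex.abs z ^ 2) - 1) ^ 2
    = 2 ^ 2 / (1 + Complex.abs z ^ 2) := by
  have hz : (1 : ℝ) + (z.re ^ 2 + z.im ^ 2) ≠ 0 := by positivity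
  simp only [sub_zero, map_mul, Complex.abs_ofReal, mul_pow, sq_abs', Complex.sub_re,
    Complex.sub_im, Complex.re_ofReal_mul, Complex.im_ofReal_mul, sq_abs' z]
  rw [abs_of_pos (by positivity : (0:ℝ) < 2 / (1 + (z.re ^ 2 + z.im ^ 2)))]
  field_simp
  ring

noncomputable def sphE (x : OnePoint ℂ) : WithLp 2 (ℂ × ℝ) :=
  (WithLp.equiv 2 (ℂ × ℝ)).symm <| Option.elim x ((0 : ℂ), (1 : ℝ))
    (fun z => ((((2 / (1 + Complex.abs z ^ 2) : ℝ)) : ℂ) * z,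
               (Complex.abs z ^ 2 - 1) / (1 + Complex.abs z ^ 2)))

lemma onePoint_cases (x : OnePoint ℂ) : x = ∞ ∨ ∃ z : ℂ, x = ↑z := by
  cases x
  · exact Or.inl rfl
  · exact Or.inr ⟨_, rfl⟩

lemma sphDist_eq_dist (x y : OnePoint ℂ) : sphDist x y = dist (sphE x) (sphE y) := by
  have habs : ∀ z w : ℂ, dist (sphE ↑z) (sphE ↑w) = 2 * Complex.abs (z - w) /
      (Real.sqrt (1 + Complex.abs z ^ 2) * Real.sqrt (1 + Complex.abs w ^ 2)) := by
    intro z w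
    rw [WithLp.prod_dist_eq_of_L2]
    have h1 : dist (sphE ↑z).fst (sphE ↑w).fst
        = Complex.abs ((((2 / (1 + Complex.abs z ^ 2) : ℝ)) : ℂ) * z
            - (((2 / (1 + Complex.abs w ^ 2) : ℝ)) : ℂ) * w) := by
      rw [Complex.abs_apply_norm, ← dist_eq_norm]; rfl
    have h2 : dist (sphE ↑z).snd (sphE ↑w).snd
        = |(Complex.abs z ^ 2 - 1) / (1 + Complex.abs z ^ 2)
            - (Complex.abs w ^ 2 - 1) / (1 + Complex.abs w ^ 2)| := rfl
    rw [h1, h2, sq_abs, key_identity]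
    rw [show (2 * Complex.abs (z - w)) ^ 2 / ((1 + Complex.abs z ^ 2) * (1 + Complex.abs w ^ 2))
        = (2 * Complex.abs (z - w) /
          (Real.sqrt (1 + Complex.abs z ^ 2) * Real.sqrt (1 + Complex.abs w ^ 2))) ^ 2 by
      rw [div_pow, mul_pow (Real.sqrt _), Real.sq_sqrt (one_add_sq_pos z).le,
        Real.sq_sqrt (one_add_sq_pos w).le]]
    have hnn : (0:ℝ) ≤ 2 * Complex.abs (z - w) /
        (Real.sqrt (1 + Complex.abs z ^ 2) * Real.sqrt (1 + Complex.abs w ^ 2)) :=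
      div_nonneg (mul_nonneg (by norm_num) (AbsoluteValue.nonneg _ _))
        (mul_nonneg (Real.sqrt_nonneg _) (Real.sqrt_nonneg _))
    exact Real.sqrt_sq hnn
  have habsinf : ∀ z : ℂ, dist (sphE ↑z) (sphE ∞) = 2 / Real.sqrt (1 + Complex.abs z ^ 2) := by
    intro z
    rw [WithLp.prod_dist_eq_of_L2]
    have h1 : dist (sphE ↑z).fst (sphE ∞).fst
        = Complex.abs ((((2 / (1 + Complex.abs z ^ 2) : ℝ)) : ℂ) * z - 0) := by
      rw [Complex.abs_apply_norm, ← dist_eq_norm]; rfl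
    have h2 : dist (sphE ↑z).snd (sphE ∞).snd
        = |(Complex.abs z ^ 2 - 1) / (1 + Complex.abs z ^ 2) - 1| := rfl
    rw [h1, h2, sq_abs, key_identity_infty]
    rw [show (2:ℝ) ^ 2 / (1 + Complex.abs z ^ 2)
        = (2 / Real.sqrt (1 + Complex.abs z ^ 2)) ^ 2 by
      rw [div_pow, Real.sq_sqrt (one_add_sq_pos z).le]]
    exact Real.sqrt_sq (by positivity)
  rcases onePoint_cases x with rfl | ⟨z, rfl⟩ <;> rcases onePoint_cases y with rfl | ⟨w, rfl⟩
  · rw [dist_self]; rfl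
  · rw [dist_comm, habsinf w]; rfl
  · rw [habsinf z]; rfl
  · rw [habs z w]; rfl

lemma sphDist_comm (x y : OnePoint ℂ) : sphDist x y = sphDist y x := by
  rw [sphDist_eq_dist, sphDist_eq_dist, dist_comm]

lemma sphDist_nonneg (x y : OnePoint ℂ) : 0 ≤ sphDist x y := by
  rw [sphDist_eq_dist]; exact dist_nonneg

lemma sphDist_triangle (x y z : OnePoint ℂ) : sphDist x z ≤ sphDist x y + sphDist y z := by
  rw [sphDist_eq_dist, sphDist_eq_dist, sphDist_eq_dist]; exact dist_triangle _ _ _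

lemma sphDist_pos_of_ne {x y : OnePoint ℂ} (h : x ≠ y) : 0 < sphDist x y := by
  rcases onePoint_cases x with rfl | ⟨z, rfl⟩ <;> rcases onePoint_cases y with rfl | ⟨w, rfl⟩
  · exact absurd rfl h
  · show (0:ℝ) < 2 / Real.sqrt (1 + Complex.abs w ^ 2)
    positivity
  · show (0:ℝ) < 2 / Real.sqrt (1 + Complex.abs z ^ 2)
    positivity
  · show (0:ℝ) < 2 * Complex.abs (z - w) /
        (Real.sqrt (1 + Complex.abs z ^ 2) * Real.sqrt (1 + Complex.abs w ^ 2))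
    have hzw : z ≠ w := fun hzw => h (by rw [hzw])
    have : 0 < Complex.abs (z - w) := by
      simpa using sub_ne_zero.mpr hzw
    positivity

lemma eq_of_sphDist_le_zero {x y : OnePoint ℂ} (h : sphDist x y ≤ 0) : x = y := by
  by_contra hne
  exact absurd h (not_le.2 (sphDist_pos_of_ne hne))

lemma sphDist_coe_coe_le (z w : ℂ) : sphDist ↑z ↑w ≤ 2 * Complex.abs (z - w) := by
  show 2 * Complex.abs (z - w) /
      (Real.sqrt (1 + Complex.abs z ^ 2) * Real.sqrt (1 + Complex.abs w ^ 2))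
    ≤ 2 * Complex.abs (z - w)
  have h1 : (1:ℝ) ≤ Real.sqrt (1 + Complex.abs z ^ 2) := by
    have := Real.sqrt_le_sqrt (show (1:ℝ) ≤ 1 + Complex.abs z ^ 2 by
      nlinarith [sq_nonneg (Complex.abs z)])
    simpa using this
  have h2 : (1:ℝ) ≤ Real.sqrt (1 + Complex.abs w ^ 2) := by
    have := Real.sqrt_le_sqrt (show (1:ℝ) ≤ 1 + Complex.abs w ^ 2 by
      nlinarith [sq_nonneg (Complex.abs w)])
    simpa using this
  have hnn : (0:ℝ) ≤ 2 * Complex.abs (z - w) :=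
    mul_nonneg (by norm_num) (AbsoluteValue.nonneg _ _)
  exact div_le_self hnn (by nlinarith)

-- rfl evaluation lemmas
lemma sphDist_coe_coe (z w : ℂ) : sphDist ↑z ↑w =
    2 * Complex.abs (z - w) /
      (Real.sqrt (1 + Complex.abs z ^ 2) * Real.sqrt (1 + Complex.abs w ^ 2)) := rfl
lemma sphDist_coe_infty (z : ℂ) : sphDist ↑z ∞ = 2 / Real.sqrt (1 + Complex.abs z ^ 2) := rfl
lemma sphDist_infty_coe (w : ℂ) : sphDist ∞ ↑w = 2 / Real.sqrt (1 + Complex.abs w ^ 2) := rfl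

noncomputable def sphInv (x : OnePoint ℂ) : OnePoint ℂ :=
  Option.elim x ((0 : ℂ) : OnePoint ℂ)
    (fun z => if z = 0 then (∞ : OnePoint ℂ) else ((z⁻¹ : ℂ) : OnePoint ℂ))

lemma sqrt_inv_aux {z : ℂ} (hz : z ≠ 0) :
    Real.sqrt (1 + Complex.abs (z⁻¹) ^ 2)
      = Real.sqrt (1 + Complex.abs z ^ 2) / Complex.abs z := by
  have ha : (0:ℝ) < Complex.abs z := by simpa using hz
  rw [map_inv₀, show (1 + ((Complex.abs z)⁻¹) ^ 2) = (1 + Complex.abs z ^ 2) / (Complex.abs z) ^ 2 by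
    field_simp; ring,
    Real.sqrt_div' _ (by positivity), Real.sqrt_sq ha.le]

lemma sphInv_infty : sphInv ∞ = ((0:ℂ) : OnePoint ℂ) := rfl

lemma sphInv_coe_zero : sphInv ((0:ℂ) : OnePoint ℂ) = ∞ := by
  show (if (0:ℂ) = 0 then (∞ : OnePoint ℂ) else _) = ∞
  rw [if_pos rfl]

lemma sphInv_coe {z : ℂ} (hz : z ≠ 0) : sphInv ↑z = ((z⁻¹ : ℂ) : OnePoint ℂ) := by
  show (if z = 0 then (∞ : OnePoint ℂ) else ((z⁻¹ : ℂ) : OnePoint ℂ)) = _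
  rw [if_neg hz]

lemma abs_pos_of_ne {z : ℂ} (hz : z ≠ 0) : 0 < Complex.abs z := by simpa using hz

lemma sphDist_sphInv_half (z : ℂ) : sphDist (sphInv ∞) (sphInv ↑z) = sphDist ∞ ↑z := by
  by_cases hz : z = 0
  · subst hz
    rw [sphInv_infty, sphInv_coe_zero, sphDist_coe_infty, sphDist_infty_coe]
  · rw [sphInv_infty, sphInv_coe hz, sphDist_coe_coe, sphDist_infty_coe, sqrt_inv_aux hz]
    have ha := abs_pos_of_ne hz
    have hs : 0 < Real.sqrt (1 + Complex.abs z ^ 2) := Real.sqrt_pos.2 (by positivity)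
    rw [zero_sub, map_neg_eq_map, map_inv₀]
    rw [show Complex.abs (0:ℂ) = 0 by simp]
    rw [show (0:ℝ)^2 = 0 by ring, add_zero, Real.sqrt_one, one_mul]
    field_simp

lemma sphDist_sphInv_coe_coe (z w : ℂ) (hz : z ≠ 0) (hw : w ≠ 0) :
    sphDist (sphInv ↑z) (sphInv ↑w) = sphDist ↑z ↑w := by
  rw [sphInv_coe hz, sphInv_coe hw, sphDist_coe_coe, sphDist_coe_coe,
    sqrt_inv_aux hz, sqrt_inv_aux hw]
  have haz := abs_pos_of_ne hz
  have haw := abs_pos_of_ne hw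
  have hsz : 0 < Real.sqrt (1 + Complex.abs z ^ 2) := Real.sqrt_pos.2 (by positivity)
  have hsw : 0 < Real.sqrt (1 + Complex.abs w ^ 2) := Real.sqrt_pos.2 (by positivity)
  have hd : z⁻¹ - w⁻¹ = (w - z) / (z * w) := by field_simp
  rw [hd, map_div₀, map_mul]
  rw [show Complex.abs (w - z) = Complex.abs (z - w) by
    rw [← Complex.abs.map_neg (w - z), neg_sub]]
  field_simp

lemma sphDist_sphInv (x y : OnePoint ℂ) : sphDist (sphInv x) (sphInv y) = sphDist x y := by
  rcases onePoint_cases x with rfl | ⟨z, rfl⟩ <;> rcases onePoint_cases y with rfl | ⟨w, rfl⟩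
  · rw [sphInv_infty, sphDist_coe_coe]
    show _ = (0:ℝ)
    simp
  · exact sphDist_sphInv_half w
  · rw [sphDist_comm (sphInv ↑z), sphDist_sphInv_half z, sphDist_infty_coe, sphDist_coe_infty]
  · by_cases hz : z = 0
    · subst hz
      by_cases hw : w = 0
      · subst hw
        rw [sphInv_coe_zero]
        show (0:ℝ) = _
        rw [sphDist_coe_coe]
        simp
      · rw [sphInv_coe_zero, sphInv_coe hw, sphDist_infty_coe, sphDist_coe_coe,
          sqrt_inv_aux hw]
        have haw := abs_pos_of_ne hw
        have hsw : 0 < Real.sqrt (1 + Complex.abs w ^ 2) := Real.sqrt_pos.2 (by positivity)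
        rw [zero_sub, map_neg_eq_map]
        rw [show Complex.abs (0:ℂ) = 0 by simp]
        rw [show (0:ℝ)^2 = 0 by ring, add_zero, Real.sqrt_one, one_mul]
        field_simp
    · by_cases hw : w = 0
      · subst hw
        rw [sphDist_comm (sphInv ↑z), sphDist_comm (↑z)]
        rw [sphInv_coe_zero, sphInv_coe hz, sphDist_infty_coe, sphDist_coe_coe,
          sqrt_inv_aux hz]
        have haz := abs_pos_of_ne hz
        have hsz : 0 < Real.sqrt (1 + Complex.abs z ^ 2) := Real.sqrt_pos.2 (by positivity)
        rw [zero_sub, map_neg_eq_map]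
        rw [show Complex.abs (0:ℂ) = 0 by simp]
        rw [show (0:ℝ)^2 = 0 by ring, add_zero, Real.sqrt_one, one_mul]
        field_simp
      · exact sphDist_sphInv_coe_coe z w hz hw

end AuxSphereGeometry

section AuxAnalysis

-- uniform convergence of polynomial evaluation from coefficient convergence
lemma tendstoUniformlyOn_poly {F : ℕ → Polynomial ℂ} {P : Polynomial ℂ} {m : ℕ}
    (hdeg : ∀ n, (F n).natDegree ≤ m) (hP : P.natDegree ≤ m)
    (hc : ∀ i, Tendsto (fun n => (F n).coeff i) atTop (𝓝 (P.coeff i)))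
    {K : Set ℂ} (hK : IsCompact K) :
    TendstoUniformlyOn (fun n z => (F n).eval z) (fun z => P.eval z) atTop K := by
  obtain ⟨r, hr⟩ := hK.isBounded.subset_closedBall 0
  set C : ℝ := max r 1 with hC
  have hC1 : (1:ℝ) ≤ C := le_max_right _ _
  have hC0 : (0:ℝ) < C := lt_of_lt_of_le one_pos hC1
  have hCm : (0:ℝ) < C ^ m := pow_pos hC0 m
  rw [Metric.tendstoUniformlyOn_iff]
  intro ε hε
  set δ : ℝ := ε / (2 * (m+1) * C ^ m) with hδdef
  have hδ : 0 < δ := by positivity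
  have hev : ∀ᶠ n in atTop, ∀ i ∈ Finset.range (m+1),
      dist (P.coeff i) ((F n).coeff i) < δ := by
    rw [eventually_all_finset]
    intro i _
    have := (hc i).eventually (Metric.ball_mem_nhds (P.coeff i) hδ)
    filter_upwards [this] with n hn
    rw [dist_comm]
    exact hn
  filter_upwards [hev] with n hn z hz
  have hzC : Complex.abs z ≤ C := by
    have := hr hz
    simp only [Metric.mem_closedBall, Complex.dist_eq, sub_zero] at this
    exact le_trans this (le_max_left _ _)
  have h1 : P.eval z = ∑ i ∈ Finset.range (m+1), P.coeff i * z ^ i :=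
    Polynomial.eval_eq_sum_range' (Nat.lt_succ_of_le hP) z
  have h2 : (F n).eval z = ∑ i ∈ Finset.range (m+1), (F n).coeff i * z ^ i :=
    Polynomial.eval_eq_sum_range' (Nat.lt_succ_of_le (hdeg n)) z
  rw [dist_eq_norm, h1, h2, ← Finset.sum_sub_distrib]
  calc ‖∑ i ∈ Finset.range (m+1), (P.coeff i * z ^ i - (F n).coeff i * z ^ i)‖
      ≤ ∑ i ∈ Finset.range (m+1), ‖P.coeff i * z ^ i - (F n).coeff i * z ^ i‖ :=
        norm_sum_le _ _
    _ ≤ ∑ i ∈ Finset.range (m+1), δ * C ^ m := by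
        apply Finset.sum_le_sum
        intro i hi
        rw [← sub_mul, norm_mul, norm_pow]
        have hd : ‖P.coeff i - (F n).coeff i‖ ≤ δ := by
          rw [← dist_eq_norm]
          exact (hn i hi).le
        have hz' : ‖z‖ ^ i ≤ C ^ m := by
          calc ‖z‖ ^ i ≤ C ^ i := pow_le_pow_left₀ (norm_nonneg z) hzC i
            _ ≤ C ^ m := pow_le_pow_right₀ hC1 (by
                have := Finset.mem_range.1 hi; omega)
        exact mul_le_mul hd hz' (by positivity) hδ.le
    _ = (m+1) * δ * C ^ m := by
        rw [Finset.sum_const, Finset.card_range]; push_cast; ring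
    _ = ε / 2 := by
        rw [hδdef]
        field_simp
    _ < ε := by linarith


lemma exists_zero_near {F : ℕ → Polynomial ℂ} {P : Polynomial ℂ} {z₀ : ℂ} {δ : ℝ}
    (hδ : 0 < δ)
    (hconv : TendstoUniformlyOn (fun n z => (F n).eval z) (fun z => P.eval z) atTop
      (Metric.closedBall z₀ δ))
    (hP0 : P.eval z₀ = 0)
    (hPne : ∀ w ∈ Metric.sphere z₀ δ, P.eval w ≠ 0) :
    ∀ᶠ n in atTop, ∃ w ∈ Metric.closedBall z₀ δ, (F n).eval w = 0 := by
  have hsne : (Metric.sphere z₀ δ).Nonempty := NormedSpace.sphere_nonempty.2 hδ.le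
  have hscomp : IsCompact (Metric.sphere z₀ δ) := isCompact_sphere z₀ δ
  have hcont : ContinuousOn (fun w => ‖P.eval w‖) (Metric.sphere z₀ δ) :=
    (P.continuous_aeval.norm).continuousOn
  obtain ⟨w₀, hw₀mem, hw₀min⟩ := hscomp.exists_isMinOn hsne hcont
  set c : ℝ := ‖P.eval w₀‖ with hc
  have hcpos : 0 < c := norm_pos_iff.2 (hPne w₀ hw₀mem)
  have hmin : ∀ w ∈ Metric.sphere z₀ δ, c ≤ ‖P.eval w‖ := fun w hw => hw₀min hw
  rw [Metric.tendstoUniformlyOn_iff] at hconv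
  have h1 := hconv (c/3) (by positivity)
  filter_upwards [h1] with n hn
  by_contra hno
  push_neg at hno
  -- 1/(F n).eval is holomorphic on a neighborhood of the closed ball; apply max principle
  have hFne : ∀ w ∈ Metric.closedBall z₀ δ, (F n).eval w ≠ 0 := fun w hw h0 => hno w hw h0
  have hdiff : DiffContOnCl ℂ (fun w => ((F n).eval w)⁻¹) (Metric.ball z₀ δ) := by
    have hd : DifferentiableOn ℂ (fun w => ((F n).eval w)⁻¹) (Metric.closedBall z₀ δ) := by
      apply DifferentiableOn.inv
      · exact (F n).differentiable.differentiableOn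
      · exact hFne
    exact DiffContOnCl.mk (hd.mono Metric.ball_subset_closedBall)
      (by rw [closure_ball z₀ hδ.ne']; exact hd.continuousOn)
  have hbound : ∀ w ∈ frontier (Metric.ball z₀ δ), ‖((F n).eval w)⁻¹‖ ≤ (2*c/3)⁻¹ := by
    intro w hw
    rw [frontier_ball z₀ hδ.ne'] at hw
    have h2 : dist (P.eval w) ((F n).eval w) < c/3 :=
      hn w (Metric.sphere_subset_closedBall hw)
    have h3 : c ≤ ‖P.eval w‖ := hmin w hw
    have h4 : 2*c/3 ≤ ‖(F n).eval w‖ := by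
      have := norm_sub_norm_le (P.eval w) ((F n).eval w)
      rw [← dist_eq_norm] at this
      linarith
    rw [norm_inv]
    exact inv_anti₀ (by positivity) h4
  have hz₀mem : z₀ ∈ closure (Metric.ball z₀ δ) := by
    rw [closure_ball z₀ hδ.ne']
    exact Metric.mem_closedBall_self hδ.le
  have hmax := Complex.norm_le_of_forall_mem_frontier_norm_le Metric.isBounded_ball
    hdiff hbound hz₀mem
  -- contradiction: |F n z₀| is both ≥ 2c/3 and < c/3
  have h5 : dist (P.eval z₀) ((F n).eval z₀) < c/3 :=
    hn z₀ (Metric.mem_closedBall_self hδ.le)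
  rw [hP0] at h5
  have h6 : ‖(F n).eval z₀‖ < c/3 := by
    rw [dist_comm, dist_zero_right] at h5
    exact h5
  have h7 : 2*c/3 ≤ ‖(F n).eval z₀‖ := by
    rw [norm_inv] at hmax
    have h8 : (0:ℝ) < ‖(F n).eval z₀‖ :=
      norm_pos_iff.2 (hFne z₀ (Metric.mem_closedBall_self hδ.le))
    have h9 := inv_anti₀ (show (0:ℝ) < ‖(F n).eval z₀‖⁻¹ by positivity) hmax
    rw [inv_inv, inv_inv] at h9
    exact h9
  linarith

end AuxAnalysis

section AuxMain
open Polynomial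
-- quotient estimate
lemma sphDist_div_est {c M : ℝ} (hc : 0 < c) (hcM : c ≤ M) {ε : ℝ} (hε : 0 < ε) :
    ∃ η > 0, ∀ p q A B : ℂ, ‖A‖ ≤ M → ‖B‖ ≤ M → c ≤ ‖B‖ →
      ‖p - A‖ < η → ‖q - B‖ < η → q ≠ 0 ∧ sphDist ↑(p/q) ↑(A/B) < ε := by
  have hM : 0 < M := lt_of_lt_of_le hc hcM
  refine ⟨min (c/2) (ε * c^2 / (16 * M)), by positivity, fun p q A B hA hB hcB hp hq => ?_⟩
  have hη1 : ‖p - A‖ < ε * c^2 / (16 * M) := lt_of_lt_of_le hp (min_le_right _ _)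
  have hη2 : ‖q - B‖ < ε * c^2 / (16 * M) := lt_of_lt_of_le hq (min_le_right _ _)
  have hη3 : ‖q - B‖ < c/2 := lt_of_lt_of_le hq (min_le_left _ _)
  have hqlow : c/2 < ‖q‖ := by
    have := norm_sub_norm_le B q
    rw [show B - q = -(q - B) by ring, norm_neg] at this
    linarith
  have hqne : q ≠ 0 := norm_pos_iff.1 (by linarith)
  have hBne : B ≠ 0 := norm_pos_iff.1 (by linarith)
  refine ⟨hqne, ?_⟩
  have hrw : p/q - A/B = (p*B - A*q)/(q*B) := by field_simp
  have hnum : ‖p*B - A*q‖ ≤ ‖p - A‖ * M + M * ‖q - B‖ := by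
    have h1 : p*B - A*q = (p - A)*B + A*(B - q) := by ring
    rw [h1]
    calc ‖(p - A)*B + A*(B - q)‖ ≤ ‖(p - A)*B‖ + ‖A*(B - q)‖ := norm_add_le _ _
      _ = ‖p - A‖ * ‖B‖ + ‖A‖ * ‖B - q‖ := by rw [norm_mul, norm_mul]
      _ ≤ ‖p - A‖ * M + M * ‖q - B‖ := by
          rw [show B - q = -(q - B) by ring, norm_neg]
          nlinarith [norm_nonneg (p - A), norm_nonneg (q - B), norm_nonneg A, norm_nonneg B]
  calc sphDist ↑(p/q) ↑(A/B) ≤ 2 * Complex.abs (p/q - A/B) := sphDist_coe_coe_le _ _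
    _ = 2 * (‖p*B - A*q‖ / (‖q‖ * ‖B‖)) := by
        rw [hrw]
        rw [show Complex.abs ((p*B - A*q)/(q*B)) = ‖(p*B - A*q)/(q*B)‖ from rfl]
        rw [norm_div, norm_mul]
    _ < ε := by
        rw [show (2:ℝ) * (‖p*B - A*q‖ / (‖q‖ * ‖B‖)) = 2 * ‖p*B - A*q‖ / (‖q‖ * ‖B‖) by ring,
          div_lt_iff₀ (mul_pos (show (0:ℝ) < ‖q‖ by linarith) (show (0:ℝ) < ‖B‖ by linarith))]
        have hd : ‖p - A‖ * M + M * ‖q - B‖ < 2 * (ε * c^2 / (16 * M)) * M := by nlinarith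
        have hsimp : 2 * (ε * c^2 / (16 * M)) * M = ε * c^2 / 8 := by field_simp; ring
        have hqB : c * (c/2) ≤ ‖q‖ * ‖B‖ := by nlinarith
        have hεq := mul_le_mul_of_nonneg_left hqB hε.le
        nlinarith [norm_nonneg (p*B - A*q)]

lemma sphInv_coe_eq (c : ℂ) :
    sphInv ↑c = if c = 0 then (∞ : OnePoint ℂ) else ((c⁻¹ : ℂ) : OnePoint ℂ) := rfl

lemma sphMero_continuousAt {g : ℂ → OnePoint ℂ} {D : Set ℂ} (hg : SphMeromorphicOn g D)
    {z₀ : ℂ} (hz₀ : z₀ ∈ D) {ε : ℝ} (hε : 0 < ε) :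
    ∃ δ > 0, ∀ w : ℂ, dist w z₀ < δ → sphDist (g w) (g z₀) < ε := by
  obtain ⟨h, hana, -, hcase⟩ := hg z₀ hz₀
  have hcont : ContinuousAt h z₀ := hana.continuousAt
  have hev2 : ∀ᶠ w in 𝓝 z₀, dist (h w) (h z₀) < ε/2 :=
    Metric.tendsto_nhds.mp hcont (ε/2) (by positivity)
  have key : ∀ᶠ w in 𝓝 z₀, sphDist (g w) (g z₀) < ε := by
    rcases hcase with hev | hev
    · have h0 : g z₀ = ↑(h z₀) := hev.self_of_nhds
      filter_upwards [hev, hev2] with w hw hd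
      rw [hw, h0]
      calc sphDist ↑(h w) ↑(h z₀) ≤ 2 * Complex.abs (h w - h z₀) := sphDist_coe_coe_le _ _
        _ = 2 * dist (h w) (h z₀) := by rw [Complex.dist_eq, Complex.abs_apply_norm]
        _ < ε := by linarith
    · have h0 : g z₀ = sphInv ↑(h z₀) := by rw [sphInv_coe_eq]; exact hev.self_of_nhds
      filter_upwards [hev, hev2] with w hw hd
      rw [← sphInv_coe_eq] at hw
      rw [hw, h0, sphDist_sphInv]
      calc sphDist ↑(h w) ↑(h z₀) ≤ 2 * Complex.abs (h w - h z₀) := sphDist_coe_coe_le _ _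
        _ = 2 * dist (h w) (h z₀) := by rw [Complex.dist_eq, Complex.abs_apply_norm]
        _ < ε := by linarith
  rw [Metric.eventually_nhds_iff] at key
  obtain ⟨δ, hδ, hkey⟩ := key
  exact ⟨δ, hδ, fun w hw => hkey hw⟩

lemma sphConv_of_local {F : ℕ → ℂ → OnePoint ℂ} {g : ℂ → OnePoint ℂ} {U : Set ℂ}
    (h : ∀ z ∈ U, ∃ δ > 0, ∀ ε > 0, ∀ᶠ n in atTop, ∀ w ∈ Metric.closedBall z δ,
      sphDist (F n w) (g w) < ε) : SphConvLocUnifOn F g U := by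
  intro K hKU hK ε hε
  choose! δ hδpos hδ using h
  obtain ⟨t, htK, hcov⟩ := hK.elim_nhds_subcover (fun z => Metric.ball z (δ z))
    (fun z hz => Metric.ball_mem_nhds z (hδpos z (hKU hz)))
  have hev : ∀ᶠ n in atTop, ∀ z ∈ t, ∀ w ∈ Metric.closedBall z (δ z),
      sphDist (F n w) (g w) < ε := by
    rw [eventually_all_finset]
    intro z hz
    exact hδ z (hKU (htK z hz)) ε hε
  filter_upwards [hev] with n hn w hw
  obtain ⟨z, hzt, hwz⟩ := Set.mem_iUnion₂.1 (hcov hw)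
  exact hn z hzt w (Metric.ball_subset_closedBall hwz)

def GoodPair (r : ℂ → OnePoint ℂ) (P Q : Polynomial ℂ) (m : ℕ) : Prop :=
  P.natDegree ≤ m ∧ Q.natDegree ≤ m ∧ (∀ z : ℂ, ¬(P.eval z = 0 ∧ Q.eval z = 0)) ∧ Q ≠ 0 ∧
    ∀ z : ℂ, r z = if Q.eval z = 0 then (∞ : OnePoint ℂ)
      else ((P.eval z / Q.eval z : ℂ) : OnePoint ℂ)

lemma goodPair_of_rational {r : ℂ → OnePoint ℂ} {m : ℕ} (h : IsRationalDegLE r m) :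
    ∃ P Q, GoodPair r P Q m := by
  obtain ⟨P, Q, hQ, hco, hdP, hdQ, heval⟩ := h
  refine ⟨P, Q, hdP, hdQ, fun z ⟨hP0, hQ0⟩ => ?_, hQ, heval⟩
  obtain ⟨a, b, hab⟩ := hco
  have := congrArg (Polynomial.eval z) hab
  simp [hP0, hQ0] at this

lemma goodPair_smul {r : ℂ → OnePoint ℂ} {P Q : Polynomial ℂ} {m : ℕ}
    (h : GoodPair r P Q m) {c : ℂ} (hc : c ≠ 0) : GoodPair r (c • P) (c • Q) m := by
  obtain ⟨h1, h2, h3, h4, h5⟩ := h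
  refine ⟨le_trans (P.natDegree_smul_le c) h1, le_trans (Q.natDegree_smul_le c) h2,
    fun z ⟨hP0, hQ0⟩ => ?_, smul_ne_zero hc h4, fun z => ?_⟩
  · rw [Polynomial.eval_smul, smul_eq_mul, mul_eq_zero] at hP0 hQ0
    exact h3 z ⟨hP0.resolve_left hc, hQ0.resolve_left hc⟩
  · rw [h5 z]
    rw [Polynomial.eval_smul, Polynomial.eval_smul, smul_eq_mul, smul_eq_mul]
    by_cases hQz : Q.eval z = 0
    · rw [if_pos hQz, if_pos (by rw [hQz, mul_zero])]
    · rw [if_neg hQz, if_neg (mul_ne_zero hc hQz), mul_div_mul_left _ _ hc]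

lemma unif_quot {P1 Q1 : ℕ → Polynomial ℂ} {Pl Ql : Polynomial ℂ} {m : ℕ}
    (hd1 : ∀ n, (P1 n).natDegree ≤ m) (hd2 : ∀ n, (Q1 n).natDegree ≤ m)
    (hdP : Pl.natDegree ≤ m) (hdQ : Ql.natDegree ≤ m)
    (hcP : ∀ i, Tendsto (fun n => (P1 n).coeff i) atTop (𝓝 (Pl.coeff i)))
    (hcQ : ∀ i, Tendsto (fun n => (Q1 n).coeff i) atTop (𝓝 (Ql.coeff i)))
    {z : ℂ} {δ : ℝ} {c : ℝ} (hc : 0 < c)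
    (hlow : ∀ w ∈ Metric.closedBall z δ, c ≤ ‖Ql.eval w‖) :
    ∀ ε > 0, ∀ᶠ n in atTop, ∀ w ∈ Metric.closedBall z δ,
      (Q1 n).eval w ≠ 0 ∧
        sphDist ↑((P1 n).eval w / (Q1 n).eval w) ↑(Pl.eval w / Ql.eval w) < ε := by
  intro ε hε
  obtain ⟨MP, hMP⟩ := (isCompact_closedBall z δ).exists_bound_of_continuousOn
    (Pl.continuous_aeval.continuousOn)
  obtain ⟨MQ, hMQ⟩ := (isCompact_closedBall z δ).exists_bound_of_continuousOn
    (Ql.continuous_aeval.continuousOn)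
  set M : ℝ := max (max MP MQ) c with hM
  have hcM : c ≤ M := le_max_right _ _
  obtain ⟨η, hη, hest⟩ := sphDist_div_est hc hcM hε
  have huP := tendstoUniformlyOn_poly hd1 hdP hcP (isCompact_closedBall z δ)
  have huQ := tendstoUniformlyOn_poly hd2 hdQ hcQ (isCompact_closedBall z δ)
  rw [Metric.tendstoUniformlyOn_iff] at huP huQ
  filter_upwards [huP η hη, huQ η hη] with n hnP hnQ w hw
  have h1 : ‖(P1 n).eval w - Pl.eval w‖ < η := by
    rw [← dist_eq_norm, dist_comm]; exact hnP w hw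
  have h2 : ‖(Q1 n).eval w - Ql.eval w‖ < η := by
    rw [← dist_eq_norm, dist_comm]; exact hnQ w hw
  exact hest _ _ _ _ (le_trans (hMP w hw) (le_trans (le_max_left _ _) (le_max_left _ _)))
    (le_trans (hMQ w hw) (le_trans (le_max_right _ _) (le_max_left _ _)))
    (hlow w hw) h1 h2

end AuxMain

/-- **Theorem 1.5.** Let `𝓡` be a family of rational functions of degree at most `m`
(restricted to a domain `D`), let `𝓖` be a family of meromorphic functions on `D`, and let
`a₁, a₂, a₃ ∈ ℂ∞` be distinct. If `𝓖` is normal in `D` and each `R ∈ 𝓡` shares `a₁, a₂, a₃`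
partially with some `g ∈ 𝓖`, then `𝓡` is normal in `D`. -/
theorem normal_of_partial_sharing_three_values_rational
    (D : Set ℂ) (hDopen : IsOpen D) (hDconn : IsConnected D) (m : ℕ)
    (R G : Set (ℂ → OnePoint ℂ))
    (hR : ∀ r ∈ R, IsRationalDegLE r m)
    (hG : ∀ g ∈ G, SphMeromorphicOn g D)
    (a₁ a₂ a₃ : OnePoint ℂ) (h12 : a₁ ≠ a₂) (h13 : a₁ ≠ a₃) (h23 : a₂ ≠ a₃)
    (hGnormal : NormalOn G D)
    (hshare : ∀ r ∈ R, ∃ g ∈ G, SharesPartially r g D a₁ ∧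
      SharesPartially r g D a₂ ∧ SharesPartially r g D a₃) :
    NormalOn R D := by
  intro s hs
  classical
  -- good pairs for each member of the sequence
  have hgp0 : ∀ n, ∃ P Q, GoodPair (s n) P Q m :=
    fun n => goodPair_of_rational (hR (s n) (hs n))
  choose P0 Q0 hgp0 using hgp0
  -- coefficient vectors, normalized
  set u : ℕ → (Fin (m+1) → ℂ) × (Fin (m+1) → ℂ) :=
    fun n => (fun i => (P0 n).coeff i, fun i => (Q0 n).coeff i) with hu
  have hu0 : ∀ n, u n ≠ 0 := by
    intro n h0
    apply (hgp0 n).2.2.2.1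
    have hlt : (Q0 n).natDegree < m + 1 := Nat.lt_succ_of_le (hgp0 n).2.1
    have := congrFun (congrArg Prod.snd h0) ⟨(Q0 n).natDegree, hlt⟩
    simp only [Prod.snd_zero, Pi.zero_apply] at this
    exact Polynomial.leadingCoeff_eq_zero.1 this
  set cs : ℕ → ℂ := fun n => ((‖u n‖ : ℝ) : ℂ)⁻¹ with hcs
  have hcsne : ∀ n, cs n ≠ 0 := by
    intro n
    simp only [hcs, ne_eq, inv_eq_zero, Complex.ofReal_eq_zero, norm_eq_zero]
    exact hu0 n
  set v : ℕ → (Fin (m+1) → ℂ) × (Fin (m+1) → ℂ) := fun n => cs n • u n with hv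
  have hv1 : ∀ n, v n ∈ Metric.sphere (0 : (Fin (m+1) → ℂ) × (Fin (m+1) → ℂ)) 1 := by
    intro n
    rw [mem_sphere_zero_iff_norm, hv]
    simp only
    rw [norm_smul, show ‖cs n‖ = ‖u n‖⁻¹ by
      rw [hcs]; simp only
      rw [norm_inv, Complex.norm_real, Real.norm_eq_abs, abs_of_nonneg (norm_nonneg _)]]
    exact inv_mul_cancel₀ (norm_ne_zero_iff.2 (hu0 n))
  obtain ⟨a, _ha, φ, hφ, hconv⟩ := (isCompact_sphere
    (0 : (Fin (m+1) → ℂ) × (Fin (m+1) → ℂ)) 1).tendsto_subseq hv1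
  have hanorm : ‖a‖ = 1 := mem_sphere_zero_iff_norm.1 _ha
  -- scaled polynomials
  set P1 : ℕ → Polynomial ℂ := fun n => cs n • P0 n with hP1
  set Q1 : ℕ → Polynomial ℂ := fun n => cs n • Q0 n with hQ1
  have hgp1 : ∀ n, GoodPair (s n) (P1 n) (Q1 n) m := fun n => goodPair_smul (hgp0 n) (hcsne n)
  -- limit polynomials
  set P : Polynomial ℂ := ∑ i : Fin (m+1), Polynomial.C (a.1 i) * Polynomial.X ^ (i:ℕ) with hPdef
  set Q : Polynomial ℂ := ∑ i : Fin (m+1), Polynomial.C (a.2 i) * Polynomial.X ^ (i:ℕ) with hQdef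
  have hcoeff : ∀ (b : Fin (m+1) → ℂ) (j : ℕ),
      (∑ i : Fin (m+1), Polynomial.C (b i) * Polynomial.X ^ (i:ℕ)).coeff j
        = if h : j < m+1 then b ⟨j, h⟩ else 0 := by
    intro b j
    rw [Polynomial.finset_sum_coeff]
    simp only [Polynomial.coeff_C_mul, Polynomial.coeff_X_pow, mul_ite, mul_one, mul_zero]
    by_cases h : j < m + 1
    · rw [dif_pos h, Finset.sum_eq_single (⟨j, h⟩ : Fin (m+1))]
      · rw [if_pos rfl]
      · intro i _ hne
        rw [if_neg (fun hij => hne (Fin.ext hij.symm))]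
      · intro hn; exact absurd (Finset.mem_univ _) hn
    · rw [dif_neg h]
      apply Finset.sum_eq_zero
      intro i _
      rw [if_neg]
      have := i.isLt
      omega
  have hPd : P.natDegree ≤ m := by
    apply Polynomial.natDegree_le_iff_coeff_eq_zero.2
    intro j hj
    rw [hPdef, hcoeff, dif_neg (by omega)]
  have hQd : Q.natDegree ≤ m := by
    apply Polynomial.natDegree_le_iff_coeff_eq_zero.2
    intro j hj
    rw [hQdef, hcoeff, dif_neg (by omega)]
  -- coefficient convergence along the subsequence
  have hP1coeff : ∀ k (i : Fin (m+1)), (P1 k).coeff i = (v k).1 i := by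
    intro k i
    rw [hP1]; simp only
    rw [Polynomial.coeff_smul, smul_eq_mul, hv]
    simp [hu]
  have hQ1coeff : ∀ k (i : Fin (m+1)), (Q1 k).coeff i = (v k).2 i := by
    intro k i
    rw [hQ1]; simp only
    rw [Polynomial.coeff_smul, smul_eq_mul, hv]
    simp [hu]
  have hcP : ∀ i, Tendsto (fun n => (P1 (φ n)).coeff i) atTop (𝓝 (P.coeff i)) := by
    intro i
    by_cases h : i < m + 1
    · have hac : Tendsto (fun n => (v (φ n)).1 ⟨i, h⟩) atTop (𝓝 (a.1 ⟨i, h⟩)) :=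
        (((continuous_apply (⟨i, h⟩ : Fin (m+1))).comp continuous_fst).tendsto a).comp hconv
      have he : P.coeff i = a.1 ⟨i, h⟩ := by rw [hPdef, hcoeff, dif_pos h]
      rw [he]
      refine hac.congr (fun n => ?_)
      exact (hP1coeff (φ n) ⟨i, h⟩).symm
    · have h1 : ∀ k, (P1 k).coeff i = 0 := fun k =>
        Polynomial.coeff_eq_zero_of_natDegree_lt (lt_of_le_of_lt (hgp1 k).1 (by omega))
      have h2 : P.coeff i = 0 := by rw [hPdef, hcoeff, dif_neg h]
      rw [h2]
      exact tendsto_const_nhds.congr (fun n => (h1 (φ n)).symm)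
  have hcQ : ∀ i, Tendsto (fun n => (Q1 (φ n)).coeff i) atTop (𝓝 (Q.coeff i)) := by
    intro i
    by_cases h : i < m + 1
    · have hac : Tendsto (fun n => (v (φ n)).2 ⟨i, h⟩) atTop (𝓝 (a.2 ⟨i, h⟩)) :=
        (((continuous_apply (⟨i, h⟩ : Fin (m+1))).comp continuous_snd).tendsto a).comp hconv
      have he : Q.coeff i = a.2 ⟨i, h⟩ := by rw [hQdef, hcoeff, dif_pos h]
      rw [he]
      refine hac.congr (fun n => ?_)
      exact (hQ1coeff (φ n) ⟨i, h⟩).symm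
    · have h1 : ∀ k, (Q1 k).coeff i = 0 := fun k =>
        Polynomial.coeff_eq_zero_of_natDegree_lt (lt_of_le_of_lt (hgp1 k).2.1 (by omega))
      have h2 : Q.coeff i = 0 := by rw [hQdef, hcoeff, dif_neg h]
      rw [h2]
      exact tendsto_const_nhds.congr (fun n => (h1 (φ n)).symm)
  -- the limit pair is not (0,0)
  have hPQne : ¬(P = 0 ∧ Q = 0) := by
    rintro ⟨hP0', hQ0'⟩
    have ha0 : a = 0 := by
      have h1 : ∀ i : Fin (m+1), a.1 i = 0 := by
        intro i
        have := hcoeff a.1 (i : ℕ)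
        rw [dif_pos i.isLt, Fin.eta, ← hPdef, hP0'] at this
        simpa using this.symm
      have h2 : ∀ i : Fin (m+1), a.2 i = 0 := by
        intro i
        have := hcoeff a.2 (i : ℕ)
        rw [dif_pos i.isLt, Fin.eta, ← hQdef, hQ0'] at this
        simpa using this.symm
      exact Prod.ext (funext h1) (funext h2)
    rw [ha0] at hanorm
    simp at hanorm
  by_cases hbad : ∃ z₀ ∈ D, P.eval z₀ = 0 ∧ Q.eval z₀ = 0
  · exfalso
    obtain ⟨z₀, hz₀D, hPz₀, hQz₀⟩ := hbad
    -- partner functions from the normal family G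
    have hpart : ∀ n, ∃ gg ∈ G, SharesPartially (s n) gg D a₁ ∧ SharesPartially (s n) gg D a₂ ∧
        SharesPartially (s n) gg D a₃ := fun n => hshare (s n) (hs n)
    choose gp hgpG hgps using hpart
    obtain ⟨ψ, hψ, g, hgconv⟩ := hGnormal (fun n => gp (φ n)) (fun n => hgpG (φ n))
    -- the value polynomials
    set Fa : OnePoint ℂ → Polynomial ℂ :=
      fun x => Option.elim x Q (fun b => P - Polynomial.C b * Q) with hFadef
    have huniq : ∀ x y : OnePoint ℂ, Fa x = 0 → Fa y = 0 → x = y := by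
      intro x y hx hy
      rcases onePoint_cases x with rfl | ⟨b, rfl⟩ <;> rcases onePoint_cases y with rfl | ⟨c, rfl⟩
      · rfl
      · exfalso
        have hQ0 : Q = 0 := hx
        have h2 : P - Polynomial.C c * Q = 0 := hy
        rw [hQ0, mul_zero, sub_zero] at h2
        exact hPQne ⟨h2, hQ0⟩
      · exfalso
        have hQ0 : Q = 0 := hy
        have h2 : P - Polynomial.C b * Q = 0 := hx
        rw [hQ0, mul_zero, sub_zero] at h2
        exact hPQne ⟨h2, hQ0⟩
      · by_contra hne
        have hbc : b ≠ c := fun h => hne (by rw [h])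
        have h1 : P - Polynomial.C b * Q = 0 := hx
        have h2 : P - Polynomial.C c * Q = 0 := hy
        have h3 : (Polynomial.C b - Polynomial.C c) * Q = 0 := by
          have : (Polynomial.C b - Polynomial.C c) * Q
              = (P - Polynomial.C c * Q) - (P - Polynomial.C b * Q) := by ring
          rw [this, h1, h2, sub_zero]
        rcases mul_eq_zero.1 h3 with h | hQ0
        · exact hbc (Polynomial.C_injective (by rwa [sub_eq_zero] at h))
        · rw [hQ0, mul_zero, sub_zero] at h1
          exact hPQne ⟨h1, hQ0⟩
    -- pick two suitable values among a₁, a₂, a₃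
    have hpick : ∃ b₁ b₂ : OnePoint ℂ, b₁ ≠ b₂ ∧ Fa b₁ ≠ 0 ∧ Fa b₂ ≠ 0 ∧
        ∀ n, SharesPartially (s n) (gp n) D b₁ ∧ SharesPartially (s n) (gp n) D b₂ := by
      by_cases h1 : Fa a₁ = 0
      · exact ⟨a₂, a₃, h23, fun h => h12 (huniq _ _ h1 h), fun h => h13 (huniq _ _ h1 h),
          fun n => ⟨(hgps n).2.1, (hgps n).2.2⟩⟩
      · by_cases h2 : Fa a₂ = 0
        · exact ⟨a₁, a₃, h13, h1, fun h => h23 (huniq _ _ h2 h),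
            fun n => ⟨(hgps n).1, (hgps n).2.2⟩⟩
        · exact ⟨a₁, a₂, h12, h1, h2, fun n => ⟨(hgps n).1, (hgps n).2.1⟩⟩
    obtain ⟨b₁, b₂, hb12, hFb₁, hFb₂, hbshare⟩ := hpick
    -- a small closed ball around z₀ inside D avoiding the other zeros of Fa b₁, Fa b₂
    set T : Set ℂ := ({w | (Fa b₁).eval w = 0} ∪ {w | (Fa b₂).eval w = 0}) \ {z₀} with hTdef
    have hfin : T.Finite :=
      (((Polynomial.finite_setOf_isRoot hFb₁).union
        (Polynomial.finite_setOf_isRoot hFb₂))).diff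
    have hopen : IsOpen (D ∩ Tᶜ) := hDopen.inter hfin.isClosed.isOpen_compl
    have hmem : z₀ ∈ D ∩ Tᶜ := ⟨hz₀D, fun hzT => hzT.2 rfl⟩
    obtain ⟨δ₀, hδ₀pos, hδ₀sub⟩ := Metric.nhds_basis_closedBall.mem_iff.1
      (hopen.mem_nhds hmem)
    have hK₀D : Metric.closedBall z₀ δ₀ ⊆ D := fun w hw => (hδ₀sub hw).1
    -- value attainment near z₀
    have hVT : ∀ b : OnePoint ℂ, Fa b ≠ 0 →
        (∀ w ∈ Metric.closedBall z₀ δ₀, w ≠ z₀ → (Fa b).eval w ≠ 0) →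
        ∀ δ : ℝ, 0 < δ → δ ≤ δ₀ →
        ∀ᶠ n in atTop, ∃ w ∈ Metric.closedBall z₀ δ, s (φ n) w = b := by
      intro b hFb hbroot δ hδ hδδ₀
      have hsub : Metric.closedBall z₀ δ ⊆ Metric.closedBall z₀ δ₀ :=
        Metric.closedBall_subset_closedBall hδδ₀
      have hsph : ∀ w ∈ Metric.sphere z₀ δ, w ∈ Metric.closedBall z₀ δ₀ ∧ w ≠ z₀ := by
        intro w hw
        refine ⟨hsub (Metric.sphere_subset_closedBall hw), fun h => ?_⟩
        rw [Metric.mem_sphere, h, dist_self] at hw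
        exact hδ.ne hw
      rcases onePoint_cases b with rfl | ⟨c, rfl⟩
      · have hmain := exists_zero_near hδ
          (tendstoUniformlyOn_poly (fun n => (hgp1 (φ n)).2.1) hQd hcQ (isCompact_closedBall _ _))
          (show Polynomial.eval z₀ Q = 0 from hQz₀)
          (fun w hw => hbroot w (hsph w hw).1 (hsph w hw).2)
        filter_upwards [hmain] with n hex
        obtain ⟨w, hw, hz⟩ := hex
        refine ⟨w, hw, ?_⟩
        rw [(hgp1 (φ n)).2.2.2.2 w, if_pos hz]
      · have hcF : ∀ i, Tendsto (fun n => (P1 (φ n) - Polynomial.C c * Q1 (φ n)).coeff i)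
            atTop (𝓝 ((P - Polynomial.C c * Q).coeff i)) := by
          intro i
          have h := (hcP i).sub ((tendsto_const_nhds (x := c)).mul (hcQ i))
          simp only [Polynomial.coeff_sub, Polynomial.coeff_C_mul]
          exact h
        have hdF : ∀ n, (P1 (φ n) - Polynomial.C c * Q1 (φ n)).natDegree ≤ m := fun n =>
          le_trans (Polynomial.natDegree_sub_le _ _)
            (max_le (hgp1 (φ n)).1 (le_trans (Polynomial.natDegree_C_mul_le _ _)
              (hgp1 (φ n)).2.1))
        have hdFl : (P - Polynomial.C c * Q).natDegree ≤ m :=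
          le_trans (Polynomial.natDegree_sub_le _ _)
            (max_le hPd (le_trans (Polynomial.natDegree_C_mul_le _ _) hQd))
        have hz₀eval : Polynomial.eval z₀ (P - Polynomial.C c * Q) = 0 := by
          simp [hPz₀, hQz₀]
        have hmain := exists_zero_near hδ
          (tendstoUniformlyOn_poly hdF hdFl hcF (isCompact_closedBall _ _))
          hz₀eval (fun w hw => hbroot w (hsph w hw).1 (hsph w hw).2)
        filter_upwards [hmain] with n hex
        obtain ⟨w, hw, hz⟩ := hex
        refine ⟨w, hw, ?_⟩
        have hz' : (P1 (φ n)).eval w = c * (Q1 (φ n)).eval w := by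
          rw [Polynomial.eval_sub, sub_eq_zero] at hz
          rw [hz, Polynomial.eval_mul, Polynomial.eval_C]
        have hQne : (Q1 (φ n)).eval w ≠ 0 := by
          intro h0
          exact (hgp1 (φ n)).2.2.1 w ⟨by rw [hz', h0, mul_zero], h0⟩
        rw [(hgp1 (φ n)).2.2.2.2 w, if_neg hQne]
        congr 1
        rw [div_eq_iff hQne, hz']
    -- the limit function g takes the value b at z₀
    have hgb : ∀ b : OnePoint ℂ,
        (∀ δ : ℝ, 0 < δ → δ ≤ δ₀ →
          ∀ᶠ n in atTop, ∃ w ∈ Metric.closedBall z₀ δ, s (φ n) w = b) →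
        (∀ n, SharesPartially (s n) (gp n) D b) → g z₀ = b := by
      intro b hVTb hshb
      have hεlt : ∀ ε : ℝ, 0 < ε → sphDist (g z₀) b < ε := by
        intro ε hε
        -- continuity of g at z₀
        obtain ⟨δc, hδcpos, hδcc⟩ : ∃ δc > 0, ∀ w : ℂ, dist w z₀ < δc →
            sphDist (g w) (g z₀) < ε/3 := by
          obtain ⟨n₀, hn₀⟩ := (hgconv (Metric.closedBall z₀ δ₀) hK₀D (isCompact_closedBall _ _)
            (ε/9) (by positivity)).exists
          simp only [Function.comp_apply] at hn₀
          obtain ⟨δc, hδcpos, hδcc⟩ := sphMero_continuousAt (hG _ (hgpG (φ (ψ n₀)))) hz₀D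
            (show (0:ℝ) < ε/9 by positivity)
          refine ⟨min δc δ₀, lt_min hδcpos hδ₀pos, fun w hwd => ?_⟩
          have hw1 : dist w z₀ < δc := lt_of_lt_of_le hwd (min_le_left _ _)
          have hw2 : w ∈ Metric.closedBall z₀ δ₀ :=
            Metric.mem_closedBall.2 (le_of_lt (lt_of_lt_of_le hwd (min_le_right _ _)))
          have hA := hn₀ w hw2
          have hB := hδcc w hw1
          have hC := hn₀ z₀ (Metric.mem_closedBall_self hδ₀pos.le)
          have e1 : sphDist (g w) (gp (φ (ψ n₀)) w) < ε/9 := by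
            rw [sphDist_comm]; exact hA
          have t1 := sphDist_triangle (g w) (gp (φ (ψ n₀)) w) (g z₀)
          have t2 := sphDist_triangle (gp (φ (ψ n₀)) w) (gp (φ (ψ n₀)) z₀) (g z₀)
          linarith
        -- pick a good index and a good point
        have h1 := (hψ.tendsto_atTop).eventually
          (hVTb (min (δc/2) δ₀) (lt_min (by linarith) hδ₀pos) (min_le_right _ _))
        have h2 := hgconv (Metric.closedBall z₀ δ₀) hK₀D (isCompact_closedBall _ _)
          (ε/3) (by positivity)
        obtain ⟨n, hex, hn2⟩ := (h1.and h2).exists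
        obtain ⟨w, hw, hwval⟩ := hex
        simp only [Function.comp_apply] at hn2
        have hw₀ : w ∈ Metric.closedBall z₀ δ₀ :=
          Metric.closedBall_subset_closedBall (min_le_right _ _) hw
        have hwD : w ∈ D := hK₀D hw₀
        have hgpw : gp (φ (ψ n)) w = b := hshb (φ (ψ n)) w hwD hwval
        have hwdist : dist w z₀ < δc := by
          have h' := Metric.mem_closedBall.1 hw
          have hm : min (δc/2) δ₀ ≤ δc/2 := min_le_left _ _
          linarith
        have hgw : sphDist (g w) b < ε/3 := by
          have := hn2 w hw₀
          rw [hgpw] at this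
          rw [sphDist_comm]
          exact this
        have t1 := sphDist_triangle (g z₀) (g w) b
        have hc2 : sphDist (g z₀) (g w) < ε/3 := by
          rw [sphDist_comm]
          exact hδcc w hwdist
        linarith
      exact eq_of_sphDist_le_zero (le_of_not_gt (fun hpos => lt_irrefl _ (hεlt _ hpos)))
    have hroot : ∀ b : OnePoint ℂ, b = b₁ ∨ b = b₂ →
        ∀ w ∈ Metric.closedBall z₀ δ₀, w ≠ z₀ → (Fa b).eval w ≠ 0 := by
      intro b hb w hw hwne h0
      have hwT : w ∈ T := by
        refine ⟨?_, hwne⟩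
        rcases hb with rfl | rfl
        · exact Or.inl h0
        · exact Or.inr h0
      exact (hδ₀sub hw).2 hwT
    have hgb₁ : g z₀ = b₁ := hgb b₁ (hVT b₁ hFb₁ (hroot b₁ (Or.inl rfl)))
      (fun n => (hbshare n).1)
    have hgb₂ : g z₀ = b₂ := hgb b₂ (hVT b₂ hFb₂ (hroot b₂ (Or.inr rfl)))
      (fun n => (hbshare n).2)
    exact hb12 (hgb₁.symm.trans hgb₂)
  · -- Case 2: the limit rational map is defined everywhere on D
    push_neg at hbad
    refine ⟨φ, hφ, fun z => if Q.eval z = 0 then (∞ : OnePoint ℂ)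
      else ((P.eval z / Q.eval z : ℂ) : OnePoint ℂ), ?_⟩
    apply sphConv_of_local
    intro z hzD
    by_cases hQz : Q.eval z = 0
    · -- pole or degeneracy: use inversion
      have hPz : P.eval z ≠ 0 := fun h => hbad z hzD h hQz
      obtain ⟨δ, hδpos, hlow⟩ : ∃ δ > 0, ∀ w ∈ Metric.closedBall z δ,
          ‖P.eval z‖/2 ≤ ‖P.eval w‖ := by
        have hc : ContinuousAt (fun w => P.eval w) z := P.continuous_aeval.continuousAt
        have hev := Metric.tendsto_nhds.mp hc (‖P.eval z‖/2) (by
          have : 0 < ‖P.eval z‖ := norm_pos_iff.2 hPz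
          positivity)
        rw [Metric.eventually_nhds_iff] at hev
        obtain ⟨δ, hδ, hkey⟩ := hev
        refine ⟨δ/2, by positivity, fun w hw => ?_⟩
        have h1 : dist w z < δ := lt_of_le_of_lt (Metric.mem_closedBall.1 hw) (by linarith)
        have h2 := hkey h1
        have h3 := norm_sub_norm_le (P.eval z) (P.eval w)
        rw [← dist_eq_norm, dist_comm] at h3
        linarith
      have hcpos : (0:ℝ) < ‖P.eval z‖/2 := by
        have : 0 < ‖P.eval z‖ := norm_pos_iff.2 hPz
        positivity
      refine ⟨δ, hδpos, fun ε hε => ?_⟩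
      have hkey := unif_quot (P1 := fun n => Q1 (φ n)) (Q1 := fun n => P1 (φ n))
        (fun n => (hgp1 (φ n)).2.1) (fun n => (hgp1 (φ n)).1) hQd hPd hcQ hcP
        hcpos hlow ε hε
      filter_upwards [hkey] with n hn w hw
      obtain ⟨hP1ne, hsph⟩ := hn w hw
      have hPwne : P.eval w ≠ 0 := by
        intro h0
        have h1 := hlow w hw
        rw [h0, norm_zero] at h1
        exact absurd h1 (not_le.2 hcpos)
      have hrep1 : (s ∘ φ) n w = sphInv ↑((Q1 (φ n)).eval w / (P1 (φ n)).eval w) := by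
        show s (φ n) w = _
        rw [(hgp1 (φ n)).2.2.2.2 w]
        by_cases hq : (Q1 (φ n)).eval w = 0
        · rw [if_pos hq, hq, zero_div, sphInv_coe_eq, if_pos rfl]
        · rw [if_neg hq, sphInv_coe_eq, if_neg (div_ne_zero hq hP1ne), inv_div]
      have hrep2 : (if Q.eval w = 0 then (∞ : OnePoint ℂ)
          else ((P.eval w / Q.eval w : ℂ) : OnePoint ℂ))
          = sphInv ↑(Q.eval w / P.eval w) := by
        by_cases hq : Q.eval w = 0
        · rw [if_pos hq, hq, zero_div, sphInv_coe_eq, if_pos rfl]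
        · rw [if_neg hq, sphInv_coe_eq, if_neg (div_ne_zero hq hPwne), inv_div]
      rw [hrep1, hrep2, sphDist_sphInv]
      exact hsph
    · -- regular point
      obtain ⟨δ, hδpos, hlow⟩ : ∃ δ > 0, ∀ w ∈ Metric.closedBall z δ,
          ‖Q.eval z‖/2 ≤ ‖Q.eval w‖ := by
        have hc : ContinuousAt (fun w => Q.eval w) z := Q.continuous_aeval.continuousAt
        have hev := Metric.tendsto_nhds.mp hc (‖Q.eval z‖/2) (by
          have : 0 < ‖Q.eval z‖ := norm_pos_iff.2 hQz
          positivity)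
        rw [Metric.eventually_nhds_iff] at hev
        obtain ⟨δ, hδ, hkey⟩ := hev
        refine ⟨δ/2, by positivity, fun w hw => ?_⟩
        have h1 : dist w z < δ := lt_of_le_of_lt (Metric.mem_closedBall.1 hw) (by linarith)
        have h2 := hkey h1
        have h3 := norm_sub_norm_le (Q.eval z) (Q.eval w)
        rw [← dist_eq_norm, dist_comm] at h3
        linarith
      have hcpos : (0:ℝ) < ‖Q.eval z‖/2 := by
        have : 0 < ‖Q.eval z‖ := norm_pos_iff.2 hQz
        positivity
      refine ⟨δ, hδpos, fun ε hε => ?_⟩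
      have hkey := unif_quot (P1 := fun n => P1 (φ n)) (Q1 := fun n => Q1 (φ n))
        (fun n => (hgp1 (φ n)).1) (fun n => (hgp1 (φ n)).2.1) hPd hQd hcP hcQ
        hcpos hlow ε hε
      filter_upwards [hkey] with n hn w hw
      obtain ⟨hQ1ne, hsph⟩ := hn w hw
      have hQwne : Q.eval w ≠ 0 := by
        intro h0
        have h1 := hlow w hw
        rw [h0, norm_zero] at h1
        exact absurd h1 (not_le.2 hcpos)
      have hrep1 : (s ∘ φ) n w = ↑((P1 (φ n)).eval w / (Q1 (φ n)).eval w) := by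
        show s (φ n) w = _
        rw [(hgp1 (φ n)).2.2.2.2 w, if_neg hQ1ne]
      rw [hrep1, if_neg hQwne]
      exact hsph
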